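/- If all raw scores lie in [0,1], then every coordinate of the unique Nash equilibrium also lies in [0,1], for arbitrary parameters λ_i > 0. -/

import Mathlib

/-- if all raw scores lie in `[0,1]`, so does every coordinate of the
Nash equilibrium. -/
theorem stmt9 (n : ℕ) (hn : 2 ≤ n) (lam shat : Fin n → ℝ) (hlam : ∀ i, 0 < lam i)
    (hshat : ∀ i, shat i ∈ Set.Icc (0 : ℝ) 1) (sstar : Fin n → ℝ)
    (hsys : ∀ i : Fin n,
      (1 + lam i) * sstar i - (∑ j ∈ Finset.univ.erase i, sstar j) / ((n : ℝ) - 1)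
        = lam i * shat i) :
    ∀ i, sstar i ∈ Set.Icc (0 : ℝ) 1 := by
  have hn2 : (2:ℝ) ≤ (n:ℝ) := by exact_mod_cast hn
  have hn1 : (0:ℝ) < (n:ℝ) - 1 := by linarith
  have hcard : ∀ i : Fin n, ((Finset.univ.erase i).card : ℝ) = (n:ℝ) - 1 := by
    intro i
    rw [Finset.card_erase_of_mem (Finset.mem_univ i), Finset.card_univ, Fintype.card_fin]
    have : 1 ≤ n := by omega
    push_cast [Nat.cast_sub this]
    ring
  have hne : (Finset.univ : Finset (Fin n)).Nonempty :=
    ⟨⟨0, by omega⟩, Finset.mem_univ _⟩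
  obtain ⟨M, -, hM⟩ := Finset.exists_max_image Finset.univ sstar hne
  obtain ⟨m, -, hm⟩ := Finset.exists_min_image Finset.univ sstar hne
  have hMub : sstar M ≤ 1 := by
    have hsum : (∑ j ∈ Finset.univ.erase M, sstar j) ≤ ((n:ℝ) - 1) * sstar M := by
      rw [← hcard M]
      calc (∑ j ∈ Finset.univ.erase M, sstar j)
          ≤ ∑ _j ∈ Finset.univ.erase M, sstar M :=
            Finset.sum_le_sum (fun j _ => hM j (Finset.mem_univ j))
        _ = ((Finset.univ.erase M).card : ℝ) * sstar M := by
            rw [Finset.sum_const, nsmul_eq_mul]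
    have h := hsys M
    have hdiv : (∑ j ∈ Finset.univ.erase M, sstar j) / ((n:ℝ) - 1) ≤ sstar M := by
      rw [div_le_iff₀ hn1]; linarith
    have hMs : lam M * sstar M ≤ lam M * shat M := by linarith
    have := (mul_le_mul_iff_right₀ (hlam M)).1 hMs
    have := (hshat M).2
    linarith
  have hmlb : 0 ≤ sstar m := by
    have hsum : ((n:ℝ) - 1) * sstar m ≤ (∑ j ∈ Finset.univ.erase m, sstar j) := by
      rw [← hcard m]
      calc ((Finset.univ.erase m).card : ℝ) * sstar m
          = ∑ _j ∈ Finset.univ.erase m, sstar m := by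
            rw [Finset.sum_const, nsmul_eq_mul]
        _ ≤ ∑ j ∈ Finset.univ.erase m, sstar j :=
            Finset.sum_le_sum (fun j _ => hm j (Finset.mem_univ j))
    have h := hsys m
    have hdiv : sstar m ≤ (∑ j ∈ Finset.univ.erase m, sstar j) / ((n:ℝ) - 1) := by
      rw [le_div_iff₀ hn1]; linarith
    have hms : lam m * shat m ≤ lam m * sstar m := by linarith
    have := (mul_le_mul_iff_right₀ (hlam m)).1 hms
    have := (hshat m).1
    linarith
  intro i
  exact ⟨le_trans hmlb (hm i (Finset.mem_univ i)), le_trans (hM i (Finset.mem_univ i)) hMub⟩
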